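/- Let n : ℕ, let f : EuclideanSpace ℝ (Fin n) → ℝ be differentiable with L-Lipschitz gradient (L ≥ 0), let S be a finite set of coordinates, and let (Ω, μ) be a probability space. Let g : Ω → EuclideanSpace ℝ (Fin n) with ω ↦ (g ω)∣S integrable, ω ↦ ‖(g ω)∣S‖^2 integrable, and ω ↦ f (x - γₜ • (g ω)∣S) integrable. Let d := ∫ (g ω)∣S ∂μ and assume ∫ ‖(g ω)∣S - d‖^2 ∂μ ≤ σ^2, and the alignment condition ⟪(gradient f x)∣S, d⟫ ≥ α * ‖d‖^2 with α > 0. Then for every γₜ ≥ 0, ∫ f (x - γₜ • (g ω)∣S) ∂μ ≤ f x - γₜ * α * (1 - γₜ * L / (2 * α)) * ‖d‖^2 + (γₜ^2 * L / 2) * σ^2. -/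

import Mathlib

open MeasureTheory

/-- The masked vector `x∣S`: keeps coordinates in `S`, zeroes out the rest. -/
def mask {n : ℕ} (S : Finset (Fin n)) (x : EuclideanSpace ℝ (Fin n)) :
    EuclideanSpace ℝ (Fin n) :=
  WithLp.toLp 2 (fun i => if i ∈ S then x i else 0)

lemma inner_mask_right {n : ℕ} (S : Finset (Fin n)) (a b : EuclideanSpace ℝ (Fin n)) :
    (inner ℝ a (mask S b) : ℝ) = inner ℝ (mask S a) b := by
  simp only [PiLp.inner_apply, RCLike.inner_apply, starRingEnd_apply, star_trivial]
  refine Finset.sum_congr rfl fun i _ => ?_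
  by_cases h : i ∈ S <;> simp [mask, h]

/-- Descent lemma for `L`-smooth functions. -/
lemma descent_lemma {n : ℕ} (f : EuclideanSpace ℝ (Fin n) → ℝ) (L : ℝ)
    (hdiff : Differentiable ℝ f)
    (hlip : ∀ x y, ‖gradient f x - gradient f y‖ ≤ L * ‖x - y‖)
    (x v : EuclideanSpace ℝ (Fin n)) :
    f (x + v) ≤ f x + (inner ℝ (gradient f x) v : ℝ) + L / 2 * ‖v‖ ^ 2 := by
  set c : ℝ := (inner ℝ (gradient f x) v : ℝ) with hc
  set h : ℝ → ℝ := fun t => f (x + t • v) - t * c - t ^ 2 * (L / 2 * ‖v‖ ^ 2) with hh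
  have hline : ∀ t : ℝ, HasDerivAt (fun s : ℝ => x + s • v) v t := fun t => by
    simpa using ((hasDerivAt_id t).smul_const v).const_add x
  have hφ : ∀ t : ℝ, HasDerivAt (fun s => f (x + s • v))
      ((inner ℝ (gradient f (x + t • v)) v : ℝ)) t := by
    intro t
    have h1 := (hdiff (x + t • v)).hasFDerivAt.comp_hasDerivAt t (hline t)
    have h2 : (inner ℝ (gradient f (x + t • v)) v : ℝ) = fderiv ℝ f (x + t • v) v :=
      InnerProductSpace.toDual_symm_apply
    rw [h2]; exact h1
  have hder : ∀ t : ℝ, HasDerivAt h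
      ((inner ℝ (gradient f (x + t • v)) v : ℝ) - c - 2 * t ^ 1 * (L / 2 * ‖v‖ ^ 2)) t := by
    intro t
    exact ((hφ t).sub ((hasDerivAt_id t).mul_const c)).sub
      (((hasDerivAt_pow 2 t)).mul_const (L / 2 * ‖v‖ ^ 2)) |>.congr_deriv (by ring_nf)
  have hanti : AntitoneOn h (Set.Icc (0 : ℝ) 1) := by
    apply antitoneOn_of_deriv_nonpos (convex_Icc 0 1)
    · exact fun t _ => ((hder t).continuousAt).continuousWithinAt
    · exact fun t _ => ((hder t).differentiableAt).differentiableWithinAt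
    · intro t ht
      rw [interior_Icc] at ht
      rw [(hder t).deriv]
      have h1 : (inner ℝ (gradient f (x + t • v)) v : ℝ) - c
          = (inner ℝ (gradient f (x + t • v) - gradient f x) v : ℝ) := by
        rw [inner_sub_left]
      have h2 : (inner ℝ (gradient f (x + t • v) - gradient f x) v : ℝ)
          ≤ ‖gradient f (x + t • v) - gradient f x‖ * ‖v‖ := real_inner_le_norm _ _
      have h3 : ‖gradient f (x + t • v) - gradient f x‖ ≤ L * ‖t • v‖ := by
        simpa using hlip (x + t • v) x
      have h4 : ‖t • v‖ = t * ‖v‖ := by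
        rw [norm_smul, Real.norm_eq_abs, abs_of_pos ht.1]
      rw [h4] at h3
      rw [pow_one]
      nlinarith [h1, h2, h3, norm_nonneg v, ht.1.le]
  have hle := hanti (Set.left_mem_Icc.2 zero_le_one) (Set.right_mem_Icc.2 zero_le_one)
    zero_le_one
  simp only [hh, zero_smul, add_zero, one_smul, zero_mul, one_mul, one_pow, zero_pow,
    sub_zero] at hle
  linarith

/-- Penultimate inequality in the proof of Lemma 1 of ProgFed, with the
explicit step-size-dependent contraction factor `(1 − γₜ L / (2α))`. -/
theorem progfed_penultimate (n : ℕ) (f : EuclideanSpace ℝ (Fin n) → ℝ)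
    (L : ℝ) (hL : 0 ≤ L) (hdiff : Differentiable ℝ f)
    (hlip : ∀ x y, ‖gradient f x - gradient f y‖ ≤ L * ‖x - y‖)
    (S : Finset (Fin n)) (Ω : Type*) [MeasurableSpace Ω]
    (μ : Measure Ω) [IsProbabilityMeasure μ]
    (g : Ω → EuclideanSpace ℝ (Fin n))
    (x : EuclideanSpace ℝ (Fin n)) (α σ γₜ : ℝ)
    (hg₁ : Integrable (fun ω => mask S (g ω)) μ)
    (hg₂ : Integrable (fun ω => ‖mask S (g ω)‖ ^ 2) μ)
    (hg₃ : Integrable (fun ω => f (x - γₜ • mask S (g ω))) μ)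
    (d : EuclideanSpace ℝ (Fin n)) (hd : d = ∫ ω, mask S (g ω) ∂μ)
    (hvar : ∫ ω, ‖mask S (g ω) - d‖ ^ 2 ∂μ ≤ σ ^ 2)
    (halign : (inner ℝ (mask S (gradient f x)) d : ℝ) ≥ α * ‖d‖ ^ 2)
    (hα : 0 < α) (hγₜ : 0 ≤ γₜ) :
    ∫ ω, f (x - γₜ • mask S (g ω)) ∂μ ≤
      f x - γₜ * α * (1 - γₜ * L / (2 * α)) * ‖d‖ ^ 2 +
        (γₜ ^ 2 * L / 2) * σ ^ 2 := by
  set u : Ω → EuclideanSpace ℝ (Fin n) := fun ω => mask S (g ω) with hu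
  -- `d` is itself masked
  have hmaskd : mask S d = d := by
    ext i
    by_cases hi : i ∈ S
    · simp [mask, hi]
    · have : d i = 0 := by
        rw [hd]
        have hproj := (EuclideanSpace.proj (𝕜 := ℝ) i).integral_comp_comm hg₁
        have : (∫ ω, mask S (g ω) ∂μ) i = ∫ ω, (mask S (g ω)) i ∂μ := by
          simpa using hproj.symm
        rw [this]
        simp [mask, hi]
      simp [mask, hi, this]
  -- the aligned inner product
  have hinner : (inner ℝ (gradient f x) d : ℝ) ≥ α * ‖d‖ ^ 2 := by
    calc (inner ℝ (gradient f x) d : ℝ) = inner ℝ (gradient f x) (mask S d) := by rw [hmaskd]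
    _ = inner ℝ (mask S (gradient f x)) d := inner_mask_right S _ d
    _ ≥ α * ‖d‖ ^ 2 := halign
  -- pointwise descent
  have hpt : ∀ ω, f (x - γₜ • u ω) ≤
      f x - γₜ * (inner ℝ (gradient f x) (u ω) : ℝ) + L / 2 * γₜ ^ 2 * ‖u ω‖ ^ 2 := by
    intro ω
    have := descent_lemma f L hdiff hlip x (-(γₜ • u ω))
    rw [sub_eq_add_neg]
    calc f (x + -(γₜ • u ω)) ≤ f x + (inner ℝ (gradient f x) (-(γₜ • u ω)) : ℝ)
        + L / 2 * ‖-(γₜ • u ω)‖ ^ 2 := this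
    _ = f x - γₜ * (inner ℝ (gradient f x) (u ω) : ℝ) + L / 2 * γₜ ^ 2 * ‖u ω‖ ^ 2 := by
        rw [inner_neg_right, real_inner_smul_right, norm_neg, norm_smul,
          Real.norm_eq_abs, abs_of_nonneg hγₜ]
        ring
  -- integrability of the pieces
  have hint1 : Integrable (fun ω => (inner ℝ (gradient f x) (u ω) : ℝ)) μ :=
    hg₁.const_inner _
  have hintRHS : Integrable (fun ω =>
      f x - γₜ * (inner ℝ (gradient f x) (u ω) : ℝ) + L / 2 * γₜ ^ 2 * ‖u ω‖ ^ 2) μ :=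
    ((integrable_const (f x)).sub (hint1.const_mul _)).add (hg₂.const_mul _)
  have hmono := integral_mono hg₃ hintRHS hpt
  -- compute the integral of the RHS
  have hEinner : ∫ ω, (inner ℝ (gradient f x) (u ω) : ℝ) ∂μ = (inner ℝ (gradient f x) d : ℝ) := by
    rw [integral_inner hg₁, ← hd]
  have hA : Integrable (fun ω => f x - γₜ * (inner ℝ (gradient f x) (u ω) : ℝ)) μ :=
    (integrable_const _).sub (hint1.const_mul _)
  have hB : Integrable (fun ω => L / 2 * γₜ ^ 2 * ‖u ω‖ ^ 2) μ := hg₂.const_mul _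
  have hC : Integrable (fun ω => γₜ * (inner ℝ (gradient f x) (u ω) : ℝ)) μ :=
    hint1.const_mul _
  have hRHS : ∫ ω, (f x - γₜ * (inner ℝ (gradient f x) (u ω) : ℝ)
      + L / 2 * γₜ ^ 2 * ‖u ω‖ ^ 2) ∂μ
      = f x - γₜ * (inner ℝ (gradient f x) d : ℝ) + L / 2 * γₜ ^ 2 * ∫ ω, ‖u ω‖ ^ 2 ∂μ := by
    rw [integral_add hA hB, integral_sub (integrable_const _) hC, integral_const,
      integral_const_mul, integral_const_mul, hEinner]
    simp [measure_univ]
  -- second moment decomposition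
  have hint2 : Integrable (fun ω => (inner ℝ (u ω) d : ℝ)) μ := hg₁.inner_const _
  have hsecond : ∫ ω, ‖u ω‖ ^ 2 ∂μ ≤ σ ^ 2 + ‖d‖ ^ 2 := by
    have hexp : ∀ ω, ‖u ω - d‖ ^ 2
        = ‖u ω‖ ^ 2 - 2 * (inner ℝ (u ω) d : ℝ) + ‖d‖ ^ 2 := fun ω =>
      norm_sub_sq_real (u ω) d
    have hvareq : ∫ ω, ‖u ω - d‖ ^ 2 ∂μ
        = ∫ ω, ‖u ω‖ ^ 2 ∂μ - 2 * (inner ℝ d d : ℝ) + ‖d‖ ^ 2 := by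
      calc ∫ ω, ‖u ω - d‖ ^ 2 ∂μ
          = ∫ ω, (‖u ω‖ ^ 2 - 2 * (inner ℝ (u ω) d : ℝ) + ‖d‖ ^ 2) ∂μ := by
            exact integral_congr_ae (Filter.Eventually.of_forall hexp)
        _ = ∫ ω, ‖u ω‖ ^ 2 ∂μ - 2 * (inner ℝ d d : ℝ) + ‖d‖ ^ 2 := by
            have hD : Integrable (fun ω => ‖u ω‖ ^ 2 - 2 * (inner ℝ (u ω) d : ℝ)) μ :=
              hg₂.sub (hint2.const_mul 2)
            have hE : Integrable (fun ω => 2 * (inner ℝ (u ω) d : ℝ)) μ := hint2.const_mul 2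
            rw [integral_add hD (integrable_const _),
              integral_sub hg₂ hE, integral_const, integral_const_mul]
            have : ∫ ω, (inner ℝ (u ω) d : ℝ) ∂μ = (inner ℝ d d : ℝ) := by
              have := integral_inner (𝕜 := ℝ) hg₁ d
              simp only [real_inner_comm d] at this ⊢
              rw [this, ← hd]
            rw [this]
            simp [measure_univ]
            rfl
    have hdd : (inner ℝ d d : ℝ) = ‖d‖ ^ 2 := real_inner_self_eq_norm_sq d
    rw [hvareq, hdd] at hvar
    linarith
  -- put everything together
  have key : ∫ ω, f (x - γₜ • u ω) ∂μ
      ≤ f x - γₜ * (α * ‖d‖ ^ 2) + L / 2 * γₜ ^ 2 * (σ ^ 2 + ‖d‖ ^ 2) := by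
    refine hmono.trans ?_
    rw [hRHS]
    have h1 : γₜ * (α * ‖d‖ ^ 2) ≤ γₜ * (inner ℝ (gradient f x) d : ℝ) :=
      mul_le_mul_of_nonneg_left hinner hγₜ
    have h2 : L / 2 * γₜ ^ 2 * ∫ ω, ‖u ω‖ ^ 2 ∂μ ≤ L / 2 * γₜ ^ 2 * (σ ^ 2 + ‖d‖ ^ 2) :=
      mul_le_mul_of_nonneg_left hsecond (by positivity)
    linarith
  refine key.trans (le_of_eq ?_)
  have hαne : α ≠ 0 := ne_of_gt hα
  field_simp
  ring
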